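/- In the network of Figure 1 (same equations and bounds), the unique maximizer of the linear objective v_1 + v_4 + v_5 + v_6 over the feasible set is (v_1,…,v_6) = (1.5, 0, 0, 3, 3, 3), attaining value 10.5; in particular v_3 = 0 at the optimum, so maximizing the sum of fluxes (LP-4) fails to certify the unblocked reaction v_3 in one iteration. -/

import Mathlib

def Feasible (v : Fin 6 → ℝ) : Prop :=
  2 * v 0 - v 1 - v 2 - v 3 = 0 ∧
  v 1 = 0 ∧
  v 3 - v 4 = 0 ∧
  v 2 + v 4 - v 5 = 0 ∧
  (∀ i : Fin 6, i ≠ 1 → 0 ≤ v i ∧ v i ≤ 3) ∧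
  (-3 ≤ v 1 ∧ v 1 ≤ 3)

lemma aux5b : (![3/2, 0, 0, 3, 3, 3] : Fin 6 → ℝ) 5 = 3 := rfl

lemma aux2b : (![3/2, 0, 0, 3, 3, 3] : Fin 6 → ℝ) 2 = 0 := rfl

lemma aux3b : (![3/2, 0, 0, 3, 3, 3] : Fin 6 → ℝ) 3 = 3 := rfl

lemma aux4b : (![3/2, 0, 0, 3, 3, 3] : Fin 6 → ℝ) 4 = 3 := rfl

lemma aux5 : (![1.5, 0, 0, 3, 3, 3] : Fin 6 → ℝ) 5 = 3 := rfl

theorem stmt_12 :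
    Feasible ![1.5, 0, 0, 3, 3, 3] ∧
    (![1.5, 0, 0, 3, 3, 3] : Fin 6 → ℝ) 0 + (![1.5, 0, 0, 3, 3, 3] : Fin 6 → ℝ) 3 +
      (![1.5, 0, 0, 3, 3, 3] : Fin 6 → ℝ) 4 + (![1.5, 0, 0, 3, 3, 3] : Fin 6 → ℝ) 5 = 10.5 ∧
    (∀ v : Fin 6 → ℝ, Feasible v →
      v 0 + v 3 + v 4 + v 5 ≤ 10.5 ∧
      (v 0 + v 3 + v 4 + v 5 = 10.5 → v = ![1.5, 0, 0, 3, 3, 3])) := by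
  refine ⟨⟨by norm_num [Matrix.cons_val_succ, aux5, aux5b, aux2b, aux3b, aux4b], by norm_num, by norm_num [Matrix.cons_val_succ, aux5, aux5b, aux2b, aux3b, aux4b], by norm_num [Matrix.cons_val_succ, aux5, aux5b, aux2b, aux3b, aux4b], ?_, by norm_num⟩,
    by norm_num [Matrix.cons_val_succ, aux5, aux5b, aux2b, aux3b, aux4b], ?_⟩
  · intro i _
    fin_cases i <;> norm_num [Matrix.cons_val_succ, aux5, aux5b]
  · intro v ⟨h1, h2, h3, h4, h5, _⟩
    have b0 := h5 0 (by decide)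
    have b2 := h5 2 (by decide)
    have b3 := h5 3 (by decide)
    have b5 := h5 5 (by decide)
    constructor
    · nlinarith [b0.1, b0.2, b2.1, b2.2, b3.1, b3.2, b5.1, b5.2]
    · intro heq
      have h0 : v 0 = 1.5 := by nlinarith [b0.1, b0.2, b2.1, b2.2, b3.1, b3.2, b5.1, b5.2]
      have hv3 : v 3 = 3 := by nlinarith [b0.1, b0.2, b2.1, b2.2, b3.1, b3.2, b5.1, b5.2]
      have hv2 : v 2 = 0 := by linarith
      have hv4 : v 4 = 3 := by linarith
      have hv5 : v 5 = 3 := by linarith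
      funext i
      fin_cases i <;> simp_all [Matrix.cons_val_succ, aux5, aux5b]
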